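/- Let 0 < s₁ ≤ s₂, with I₁, I₂ as the Poisson mutual information functions with gains α, 1 and dark currents s₁, s₂, and let f₂(q) = (I₂(q) − I₁(q))/q on (0,1]. Then the derivative of f₂ satisfies f₂'(q) = q^{-2}·(α − g₂(q))·(q − s₁·log(1 + q/s₁)), where g₂(x) = (s₂·log(1+x/s₂) − x)/(s₁·log(1+x/s₁) − x). -/

import Mathlib

open Real Set

lemma key_hasDerivAt (s q : ℝ) (hs : 0 < s) (hq : 0 < q) :
    HasDerivAt (fun q : ℝ => -(q + s) * Real.log (q + s) + q * (1 + s) * Real.log (1 + s)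
        + (1 - q) * s * Real.log s)
      (-(Real.log (q + s) + 1) + (1 + s) * Real.log (1 + s) - s * Real.log s) q := by
  have h1 : HasDerivAt (fun y : ℝ => (y + s) * Real.log (y + s)) ((Real.log (q + s) + 1) * 1) q :=
    by have := (Real.hasDerivAt_mul_log (by positivity : q + s ≠ 0)).comp q ((hasDerivAt_id q).add_const s); exact this
  have h2 : HasDerivAt (fun y : ℝ => y * ((1 + s) * Real.log (1 + s)))
      ((1 + s) * Real.log (1 + s)) q := hasDerivAt_mul_const _
  have h3 : HasDerivAt (fun y : ℝ => (1 - y) * (s * Real.log s)) (-(s * Real.log s)) q := by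
    simpa using ((hasDerivAt_id q).const_sub 1).mul_const (s * Real.log s)
  have := (h1.neg.add h2).add h3
  refine this.congr_of_eventuallyEq (Filter.Eventually.of_forall fun x => by simp only [Pi.add_apply, Pi.neg_apply]; ring) |>.congr_deriv ?_
  ring

theorem f2_deriv (s₁ s₂ α : ℝ) (h1 : 0 < s₁) (h12 : s₁ ≤ s₂) :
    ∀ q ∈ Ioc (0:ℝ) 1,
      deriv (fun q : ℝ =>
        ((-(q + s₂) * Real.log (q + s₂) + q * (1 + s₂) * Real.log (1 + s₂)
            + (1 - q) * s₂ * Real.log s₂)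
          - α * (-(q + s₁) * Real.log (q + s₁) + q * (1 + s₁) * Real.log (1 + s₁)
            + (1 - q) * s₁ * Real.log s₁)) / q) q
      = ((α - (s₂ * Real.log (1 + q / s₂) - q) / (s₁ * Real.log (1 + q / s₁) - q))
          * (q - s₁ * Real.log (1 + q / s₁))) / q ^ 2 := by
  intro q hq
  have hq0 : 0 < q := hq.1
  have h2 : 0 < s₂ := lt_of_lt_of_le h1 h12
  have H1 := key_hasDerivAt s₁ q h1 hq0
  have H2 := key_hasDerivAt s₂ q h2 hq0
  have HN := (H2.sub (H1.const_mul α)).div (hasDerivAt_id q) hq0.ne'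
  simp only [id_eq, Pi.sub_apply] at HN
  erw [HN.deriv]
  -- log identities
  have e1 : Real.log (1 + q / s₁) = Real.log (q + s₁) - Real.log s₁ := by
    rw [show (1 + q / s₁ : ℝ) = (q + s₁) / s₁ by field_simp; ring, Real.log_div (by positivity) h1.ne']
  have e2 : Real.log (1 + q / s₂) = Real.log (q + s₂) - Real.log s₂ := by
    rw [show (1 + q / s₂ : ℝ) = (q + s₂) / s₂ by field_simp; ring, Real.log_div (by positivity) h2.ne']
  have hlt : s₁ * Real.log (1 + q / s₁) < q := by
    have hx : Real.log (1 + q / s₁) < (1 + q / s₁) - 1 :=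
      Real.log_lt_sub_one_of_pos (by positivity)
        (ne_of_gt (lt_add_of_pos_right 1 (by positivity)))
    have : Real.log (1 + q / s₁) < q / s₁ := by linarith
    calc s₁ * Real.log (1 + q / s₁) < s₁ * (q / s₁) := by
          exact (mul_lt_mul_iff_right₀ h1).mpr this
      _ = q := by field_simp
  have hne : s₁ * Real.log (1 + q / s₁) - q ≠ 0 := by linarith
  rw [e1, e2] at *
  field_simp
  ring
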